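/- Let L = F x ⊕ V be a 3-dimensional Lie algebra over a field F where V is a 2-dimensional abelian ideal and ad x restricted to V is invertible with no eigenvector in V. Then the only two-dimensional Lie subalgebra of L is V. -/

import Mathlib

open Module

/-- Let `L = Fx ⊕ V` be a 3-dimensional Lie algebra where `V` is a
2-dimensional abelian ideal and `ad x` acts invertibly on `V` with no
eigenvector in `V`. Then the only two-dimensional Lie subalgebra of `L`
is `V`. -/
theorem unique_two_dim_subalgebra_of_no_eigenvector
    (F : Type*) [Field F] (L : Type*) [LieRing L] [LieAlgebra F L]
    (hdim : finrank F L = 3)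
    (x : L) (V : LieIdeal F L)
    (hV : finrank F V = 2)
    (hVab : ∀ a ∈ V, ∀ b ∈ V, ⁅a, b⁆ = 0)
    (hdecomp : Submodule.span F {x} ⊔ (V : Submodule F L) = ⊤)
    (hx : x ∉ V)
    (hinj : ∀ v ∈ V, ⁅x, v⁆ = 0 → v = 0)
    (heig : ¬ ∃ v ∈ V, v ≠ 0 ∧ ∃ c : F, ⁅x, v⁆ = c • v) :
    ∀ U : LieSubalgebra F L, finrank F U = 2 →
      (U : Submodule F L) = (V : Submodule F L) := by
  have hfd : FiniteDimensional F L := FiniteDimensional.of_finrank_pos (by omega)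
  intro U hU
  have hU' : finrank F (U : Submodule F L) = 2 := hU
  have hV' : finrank F (V : Submodule F L) = 2 := hV
  by_cases hle : (U : Submodule F L) ≤ (V : Submodule F L)
  · exact Submodule.eq_of_le_of_finrank_eq hle (hU'.trans hV'.symm)
  exfalso
  obtain ⟨u, huU, huV⟩ := SetLike.not_le_iff_exists.mp hle
  -- decompose u
  have hu_top : u ∈ Submodule.span F {x} ⊔ (V : Submodule F L) := by
    rw [hdecomp]; trivial
  obtain ⟨y, hy, v, hvV, hyv⟩ := Submodule.mem_sup.mp hu_top
  obtain ⟨a, rfl⟩ := Submodule.mem_span_singleton.mp hy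
  have ha : a ≠ 0 := by
    rintro rfl
    rw [← hyv, zero_smul, zero_add] at huV
    exact huV hvV
  rw [← hyv] at huU huV
  -- the intersection
  set W : Submodule F L := (U : Submodule F L) ⊓ (V : Submodule F L) with hW
  have hsup : (V : Submodule F L) < (U : Submodule F L) ⊔ (V : Submodule F L) :=
    lt_of_le_of_ne le_sup_right (by
      intro h
      exact huV (h ▸ (le_sup_left : (U : Submodule F L) ≤ _) huU))
  have h3 : finrank F ((U : Submodule F L) ⊔ (V : Submodule F L) : Submodule F L) = 3 := by
    have h1 : finrank F ((U : Submodule F L) ⊔ (V : Submodule F L) : Submodule F L) ≤ 3 := by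
      rw [← hdim]; exact Submodule.finrank_le _
    have h2 := Submodule.finrank_lt_finrank_of_lt hsup
    omega
  have hrank := Submodule.finrank_sup_add_finrank_inf_eq (U : Submodule F L) (V : Submodule F L)
  rw [hU', hV', h3] at hrank
  have hW1 : finrank F W = 1 := by rw [hW]; omega
  -- get nonzero w in W
  obtain ⟨w, hwW, hw0⟩ : ∃ w ∈ W, w ≠ 0 := by
    have : Nontrivial W := (Module.finrank_pos_iff (R := F)).mp (by omega)
    obtain ⟨⟨w, hwW⟩, hne⟩ := exists_ne (0 : W)
    exact ⟨w, hwW, fun h => hne (Subtype.ext h)⟩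
  have hwU : w ∈ U := hwW.1
  have hwV : w ∈ V := hwW.2
  -- W = span w
  have hspan : Submodule.span F {w} = W := by
    apply Submodule.eq_of_le_of_finrank_eq
    · rw [Submodule.span_le, Set.singleton_subset_iff]; exact hwW
    · rw [finrank_span_singleton hw0, hW1]
  -- bracket computation
  have hbr : ⁅a • x + v, w⁆ = a • ⁅x, w⁆ := by
    rw [add_lie, smul_lie, hVab v hvV w hwV, add_zero]
  have hbrU : ⁅a • x + v, w⁆ ∈ (U : Submodule F L) := U.lie_mem ((U.mem_toSubmodule.mp huU)) ((U.mem_toSubmodule.mp hwU))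
  have hbrV : ⁅a • x + v, w⁆ ∈ (V : Submodule F L) := V.lie_mem hwV
  have hxwW : ⁅x, w⁆ ∈ W := by
    have : ⁅x, w⁆ = a⁻¹ • ⁅a • x + v, w⁆ := by
      rw [hbr, smul_smul, inv_mul_cancel₀ ha, one_smul]
    rw [this]
    exact W.smul_mem _ ⟨hbrU, hbrV⟩
  rw [← hspan] at hxwW
  obtain ⟨c, hc⟩ := Submodule.mem_span_singleton.mp hxwW
  exact heig ⟨w, hwV, hw0, c, hc.symm⟩
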